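/- Let f : ℝⁿ → ℝⁿ be a quadratic vector field and suppose x, x' satisfy the Kahan equation (x' - x)/h = 2 f((x+x')/2) - (1/2) f(x) - (1/2) f(x'). If I + (h/2) f'(x') is invertible, then (x' - x)/h = (I + (h/2) f'(x'))⁻¹ f(x'). -/

import Mathlib

/-- If `x, x'` satisfy the Kahan equation for a quadratic vector field `f`
and `I + (h/2) f'(x')` is invertible, then `(x'-x)/h = (I + (h/2) f'(x'))⁻¹ f(x')`. -/
theorem kahan_adjoint_rosenbrock_form (n : ℕ) (f : (Fin n → ℝ) → (Fin n → ℝ))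
    (Q : (Fin n → ℝ) →ₗ[ℝ] (Fin n → ℝ) →ₗ[ℝ] (Fin n → ℝ))
    (L : (Fin n → ℝ) →ₗ[ℝ] (Fin n → ℝ)) (c : Fin n → ℝ)
    (hQ : ∀ x y, Q x y = Q y x)
    (hf : ∀ x, f x = Q x x + L x + c)
    (h : ℝ) (hh : h ≠ 0) (x x' : Fin n → ℝ)
    (hkahan : (1/h) • (x' - x) =
      (2 : ℝ) • f ((1/2 : ℝ) • (x + x')) - (1/2 : ℝ) • f x - (1/2 : ℝ) • f x')
    (hinv : IsUnit ((1 : (Fin n → ℝ) →L[ℝ] (Fin n → ℝ)) + (h/2) • fderiv ℝ f x')) :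
    (1/h) • (x' - x) =
      (Ring.inverse ((1 : (Fin n → ℝ) →L[ℝ] (Fin n → ℝ)) + (h/2) • fderiv ℝ f x'))
        (f x') := by
  -- continuous bilinear version of Q
  let Qc : (Fin n → ℝ) →L[ℝ] (Fin n → ℝ) →L[ℝ] (Fin n → ℝ) :=
    LinearMap.toContinuousLinearMap
      ((LinearMap.toContinuousLinearMap :
        ((Fin n → ℝ) →ₗ[ℝ] (Fin n → ℝ)) ≃ₗ[ℝ] ((Fin n → ℝ) →L[ℝ] (Fin n → ℝ))).toLinearMap ∘ₗ Q)
  have hQc : ∀ a b : Fin n → ℝ, Qc a b = Q a b := fun a b => rfl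
  -- derivative of f at x'
  have hderiv : HasFDerivAt f
      (LinearMap.toContinuousLinearMap ((2:ℝ) • (Q x') + L)) x' := by
    have h1 : HasFDerivAt (fun y : Fin n → ℝ => Qc y y)
        (Qc.precompR (Fin n → ℝ) x' (ContinuousLinearMap.id ℝ (Fin n → ℝ))
          + Qc.precompL (Fin n → ℝ) (ContinuousLinearMap.id ℝ (Fin n → ℝ)) x') x' :=
      Qc.hasFDerivAt_of_bilinear (hasFDerivAt_id x') (hasFDerivAt_id x')
    have h2 : HasFDerivAt (fun y : Fin n → ℝ => (L : (Fin n → ℝ) → (Fin n → ℝ)) y)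
        (LinearMap.toContinuousLinearMap L) x' :=
      (LinearMap.toContinuousLinearMap L).hasFDerivAt
    have h3 : HasFDerivAt (fun y : Fin n → ℝ => Qc y y + (L : (Fin n → ℝ) → (Fin n → ℝ)) y + c) _ x' :=
      (h1.add h2).add_const c
    have heq : (fun y : Fin n → ℝ => Qc y y + (L : (Fin n → ℝ) → (Fin n → ℝ)) y + c) = f := by
      funext y; rw [hf y, hQc]
    rw [heq] at h3
    refine h3.congr_fderiv ?_
    ext v
    simp [hQc, hQ x' v, two_smul]
  rw [hderiv.fderiv] at hinv ⊢
  set D : (Fin n → ℝ) →L[ℝ] (Fin n → ℝ) :=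
    LinearMap.toContinuousLinearMap ((2:ℝ) • (Q x') + L) with hD
  set B : (Fin n → ℝ) →L[ℝ] (Fin n → ℝ) := 1 + (h/2) • D with hB
  have hBv : ∀ v : Fin n → ℝ, B v = v + (h/2) • ((2:ℝ) • Q x' v + L v) := by
    intro v; simp [hB, hD]
  -- division-free form of the Kahan equation
  have hk2 : x' - x = h • Q x' x + (h/2) • L x + (h/2) • L x' + h • c := by
    have e1 : h • ((1/h) • (x' - x)) = x' - x := by
      rw [smul_smul]; field_simp; rw [one_smul]
    rw [← e1, hkahan]
    simp only [hf, map_add, map_smul, smul_add, smul_sub, LinearMap.add_apply,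
      LinearMap.smul_apply]
    rw [hQ x x']
    module
  have key : B ((1/h) • (x' - x)) = f x' := by
    refine smul_right_injective (Fin n → ℝ) hh ?_
    show h • B ((1/h) • (x' - x)) = h • f x'
    rw [← map_smul, smul_smul, mul_one_div_cancel hh, one_smul, hBv, hf x']
    simp only [map_sub, LinearMap.sub_apply]
    linear_combination (norm := module) hk2
  rw [← key]
  have hBinv : Ring.inverse B * B = 1 := Ring.inverse_mul_cancel B hinv
  calc (1/h) • (x' - x)
      = (Ring.inverse B * B) ((1/h) • (x' - x)) := by
        rw [hBinv]; simp
    _ = (Ring.inverse B) (B ((1/h) • (x' - x))) := rfl
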